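/- There exists a lower semicontinuous submeasure φ_max on P(ℕ) such that for every lower semicontinuous submeasure π on P(ℕ), Exh(π) ≤_wRK Exh(φ_max). -/

import Mathlib

open scoped ENNReal

/-- A submeasure on `P(ℕ)`. -/
def IsSubmeasure (φ : Set ℕ → ℝ≥0∞) : Prop :=
  φ ∅ = 0 ∧ (∀ X Y : Set ℕ, X ⊆ Y → φ X ≤ φ Y) ∧ ∀ X Y : Set ℕ, φ (X ∪ Y) ≤ φ X + φ Y

/-- Lower semicontinuity: `φ(X) = lim_n φ(X ∩ {0,…,n-1})`. -/
def IsLSCSubmeasure (φ : Set ℕ → ℝ≥0∞) : Prop :=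
  ∀ X : Set ℕ, Filter.Tendsto (fun n => φ (X ∩ {k | k < n})) Filter.atTop (nhds (φ X))

/-- The exhaustive ideal of a submeasure. -/
def Exh (φ : Set ℕ → ℝ≥0∞) : Set (Set ℕ) :=
  {X | ∀ ε : ℝ≥0∞, 0 < ε → ∃ F : Finset ℕ, φ (X \ (F : Set ℕ)) < ε}

/-- Weak Rudin–Keisler reducibility: there is an infinite `B' ⊆ B` and `f : B' → A`
such that `X ∈ I ↔ f⁻¹[X] ∈ J` for all `X ⊆ A`. -/
def wRK {A B : Type*} (I : Set (Set A)) (J : Set (Set B)) : Prop :=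
  ∃ (B' : Set B) (f : B' → A), B'.Infinite ∧
    ∀ X : Set A, X ∈ I ↔ (Subtype.val '' (f ⁻¹' X)) ∈ J

open scoped NNReal

noncomputable section
namespace WRKC

abbrev Node : Type := ℕ × (Finset ℕ →₀ ℕ)

def ncode : List Node → ℕ := (Countable.exists_injective_nat (List Node)).choose

lemma ncode_inj : Function.Injective ncode :=
  (Countable.exists_injective_nat (List Node)).choose_spec

def pw (k : ℕ) : ℝ≥0∞ := (2 : ℝ≥0∞)⁻¹ ^ k

lemma pw_anti {m n : ℕ} (h : m ≤ n) : pw n ≤ pw m := by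
  unfold pw
  exact pow_le_pow_of_le_one (zero_le) (ENNReal.inv_le_one.mpr one_le_two) h

def nEval (v : Node) (A : Finset ℕ) : ℝ≥0∞ := (v.2 (A ∩ Finset.range v.1) : ℝ≥0∞) / 2 ^ v.1

def lastN (p : List Node) : Node := p.getD (p.length - 1) default

lemma lastN_eq (p : List Node) (h : 0 < p.length) : lastN p = p[p.length - 1]'(by omega) :=
  List.getD_eq_getElem p default (by omega)

def Good (p : List Node) : Prop :=
  0 < p.length ∧
  (∀ (j : ℕ) (h : j < p.length), nEval (p[j]'h) ∅ = 0) ∧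
  (∀ (j : ℕ) (h : j < p.length) (A B : Finset ℕ), A ⊆ B → nEval (p[j]'h) A ≤ nEval (p[j]'h) B) ∧
  (∀ (j : ℕ) (h : j < p.length) (A B : Finset ℕ),
      nEval (p[j]'h) (A ∪ B) ≤ nEval (p[j]'h) A + nEval (p[j]'h) B) ∧
  (∀ (j : ℕ) (h : j + 1 < p.length) (A : Finset ℕ), A ⊆ Finset.range (j + 1) →
      nEval (p[j+1]'h) A ≤ nEval (p[j]'(by omega)) A + pw (j + 1) ∧
      nEval (p[j]'(by omega)) A ≤ nEval (p[j+1]'h) A + pw (j + 1))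

open Classical in
def Lf (p : List Node) (Z : Set ℕ) : Finset ℕ :=
  (Finset.range p.length).filter (fun i => ncode (p.take (i + 1)) ∈ Z)

open Classical in
def pval (p : List Node) (Z : Set ℕ) : ℝ≥0∞ :=
  if h : Good p then nEval (lastN p) (Lf p Z) else 0

def phimax (Z : Set ℕ) : ℝ≥0∞ := ⨆ p : List Node, pval p Z

lemma Lf_empty (p : List Node) : Lf p (∅ : Set ℕ) = ∅ := by
  simp [Lf]

lemma mem_Lf {p : List Node} {Z : Set ℕ} {i : ℕ} :
    i ∈ Lf p Z ↔ i < p.length ∧ ncode (p.take (i + 1)) ∈ Z := by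
  classical
  simp [Lf]

lemma Lf_mono (p : List Node) {Z Z' : Set ℕ} (h : Z ⊆ Z') : Lf p Z ⊆ Lf p Z' := by
  intro i hi
  rw [mem_Lf] at hi ⊢
  exact ⟨hi.1, h hi.2⟩

lemma Lf_union (p : List Node) (Z Z' : Set ℕ) : Lf p (Z ∪ Z') = Lf p Z ∪ Lf p Z' := by
  ext i
  rw [Finset.mem_union, mem_Lf, mem_Lf, mem_Lf, Set.mem_union]
  tauto

lemma pval_empty (p : List Node) : pval p (∅ : Set ℕ) = 0 := by
  unfold pval
  split
  · next hg =>
      rw [Lf_empty, lastN_eq p hg.1]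
      exact hg.2.1 _ _
  · rfl

lemma pval_mono (p : List Node) {Z Z' : Set ℕ} (h : Z ⊆ Z') : pval p Z ≤ pval p Z' := by
  unfold pval
  split
  · next hg =>
      rw [lastN_eq p hg.1]
      exact hg.2.2.1 _ _ _ _ (Lf_mono p h)
  · exact le_rfl

lemma pval_union (p : List Node) (Z Z' : Set ℕ) :
    pval p (Z ∪ Z') ≤ pval p Z + pval p Z' := by
  unfold pval
  split
  · next hg =>
      rw [lastN_eq p hg.1, Lf_union]
      exact hg.2.2.2.1 _ _ _ _
  · exact zero_le

lemma isSubmeasure_phimax : IsSubmeasure phimax := by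
  refine ⟨?_, ?_, ?_⟩
  · simp [phimax, pval_empty]
  · intro Z Z' h
    exact iSup_mono fun p => pval_mono p h
  · intro Z Z'
    refine iSup_le fun p => ?_
    exact le_trans (pval_union p Z Z')
      (add_le_add (le_iSup (fun p => pval p Z) p) (le_iSup (fun p => pval p Z') p))

lemma pval_window (p : List Node) (Z : Set ℕ) :
    ∃ N : ℕ, ∀ n, N ≤ n → pval p (Z ∩ {k | k < n}) = pval p Z := by
  classical
  refine ⟨(Finset.sup (Finset.range p.length) fun i => ncode (p.take (i + 1))) + 1, ?_⟩
  intro n hn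
  have hLf : Lf p (Z ∩ {k | k < n}) = Lf p Z := by
    ext i
    rw [mem_Lf, mem_Lf]
    constructor
    · rintro ⟨h1, h2, _⟩
      exact ⟨h1, h2⟩
    · rintro ⟨h1, h2⟩
      refine ⟨h1, h2, ?_⟩
      have h3 := Finset.le_sup (f := fun i => ncode (p.take (i + 1))) (Finset.mem_range.mpr h1)
      simp only [Set.mem_setOf_eq]
      omega
  unfold pval
  rw [hLf]

lemma isLSC_phimax : IsLSCSubmeasure phimax := by
  intro Z
  have hmono : Monotone (fun n => phimax (Z ∩ {k | k < n})) := by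
    intro a b hab
    exact isSubmeasure_phimax.2.1 _ _ (Set.inter_subset_inter_right _ (fun x hx => lt_of_lt_of_le hx (by exact_mod_cast hab)))
  have hsup : (⨆ n, phimax (Z ∩ {k | k < n})) = phimax Z := by
    apply le_antisymm
    · exact iSup_le fun n => isSubmeasure_phimax.2.1 _ _ Set.inter_subset_left
    · refine iSup_le fun p => ?_
      obtain ⟨N, hN⟩ := pval_window p Z
      calc pval p Z = pval p (Z ∩ {k | k < N}) := (hN N le_rfl).symm
        _ ≤ phimax (Z ∩ {k | k < N}) := le_iSup (fun q => pval q (Z ∩ {k | k < N})) p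
        _ ≤ ⨆ n, phimax (Z ∩ {k | k < n}) := le_iSup (fun n => phimax (Z ∩ {k | k < n})) N
  rw [← hsup]
  exact tendsto_atTop_iSup hmono

-- § capped submeasure π₁

section Pi

variable (π : Set ℕ → ℝ≥0∞)

def pi1 : Set ℕ → ℝ≥0∞ := fun Z => min (π Z) 1

lemma pi1_le_one (Z : Set ℕ) : pi1 π Z ≤ 1 := min_le_right _ _

lemma pi1_ne_top (Z : Set ℕ) : pi1 π Z ≠ ⊤ :=
  ne_top_of_le_ne_top ENNReal.one_ne_top (pi1_le_one π Z)

lemma pi1_empty (hs : IsSubmeasure π) : pi1 π ∅ = 0 := by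
  simp [pi1, hs.1]

lemma pi1_mono (hs : IsSubmeasure π) {Z Z' : Set ℕ} (h : Z ⊆ Z') : pi1 π Z ≤ pi1 π Z' :=
  min_le_min (hs.2.1 _ _ h) le_rfl

lemma pi1_subadd (hs : IsSubmeasure π) (Z Z' : Set ℕ) :
    pi1 π (Z ∪ Z') ≤ pi1 π Z + pi1 π Z' := by
  rcases le_total 1 (π Z) with h | h
  · calc pi1 π (Z ∪ Z') ≤ 1 := min_le_right _ _
      _ = min (π Z) 1 + 0 := by rw [min_eq_right h, add_zero]
      _ ≤ pi1 π Z + pi1 π Z' := add_le_add le_rfl (zero_le)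
  · rcases le_total 1 (π Z') with h' | h'
    · calc pi1 π (Z ∪ Z') ≤ 1 := min_le_right _ _
        _ = 0 + min (π Z') 1 := by rw [min_eq_right h', zero_add]
        _ ≤ pi1 π Z + pi1 π Z' := add_le_add (zero_le) le_rfl
    · calc pi1 π (Z ∪ Z') ≤ π (Z ∪ Z') := min_le_left _ _
        _ ≤ π Z + π Z' := hs.2.2 _ _
        _ = pi1 π Z + pi1 π Z' := by rw [pi1, pi1, min_eq_left h, min_eq_left h']

lemma pi1_lsc (hl : IsLSCSubmeasure π) : IsLSCSubmeasure (pi1 π) := by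
  intro X
  exact (hl X).min tendsto_const_nhds

lemma exh_iff (hs : IsSubmeasure π) (X : Set ℕ) : X ∈ Exh π ↔ X ∈ Exh (pi1 π) := by
  constructor
  · intro h ε hε
    obtain ⟨F, hF⟩ := h ε hε
    exact ⟨F, lt_of_le_of_lt (min_le_left _ _) hF⟩
  · intro h ε hε
    obtain ⟨F, hF⟩ := h (min ε 1) (lt_min hε zero_lt_one)
    refine ⟨F, ?_⟩
    have h1 : pi1 π (X \ ↑F) < 1 := lt_of_lt_of_le hF (min_le_right _ _)
    have h2 : π (X \ ↑F) < 1 := by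
      by_contra hc
      push_neg at hc
      rw [pi1, min_eq_right hc] at h1
      exact lt_irrefl _ h1
    have h3 : pi1 π (X \ ↑F) = π (X \ ↑F) := min_eq_left h2.le
    rw [h3] at hF
    exact lt_of_lt_of_le hF (min_le_left _ _)

-- § dyadic approximation nodes

def num (k : ℕ) (A : Finset ℕ) : ℕ := ⌈((pi1 π ↑A).toNNReal : ℝ≥0) * (2 : ℝ≥0) ^ k⌉₊

def mkN (k : ℕ) : Node :=
  (k, Finsupp.onFinset ((Finset.range k).powerset)
      (fun A => if A ⊆ Finset.range k then num π k A else 0)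
      (by
        intro A hA
        rw [Finset.mem_powerset]
        by_contra hc
        exact hA (if_neg hc)))

lemma nEval_mkN (k : ℕ) (A : Finset ℕ) :
    nEval (mkN π k) A = ((num π k (A ∩ Finset.range k) : ℕ) : ℝ≥0∞) / 2 ^ k := by
  simp only [nEval, mkN, Finsupp.onFinset_apply]
  rw [if_pos Finset.inter_subset_right]

lemma two_pow_ne_zero (k : ℕ) : ((2 : ℝ≥0∞) ^ k) ≠ 0 := by
  exact pow_ne_zero k two_ne_zero

lemma two_pow_ne_top (k : ℕ) : ((2 : ℝ≥0∞) ^ k) ≠ ⊤ := by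
  exact ENNReal.pow_ne_top ENNReal.ofNat_ne_top

lemma mkN_ge (k : ℕ) (A : Finset ℕ) (hA : A ⊆ Finset.range k) :
    pi1 π ↑A ≤ nEval (mkN π k) A := by
  rw [nEval_mkN, Finset.inter_eq_left.mpr hA]
  rw [ENNReal.le_div_iff_mul_le (Or.inl (two_pow_ne_zero k)) (Or.inl (two_pow_ne_top k))]
  have h : ((pi1 π ↑A).toNNReal * (2 : ℝ≥0) ^ k : ℝ≥0) ≤ ((num π k A : ℕ) : ℝ≥0) :=
    Nat.le_ceil _
  have h2 := ENNReal.coe_le_coe.mpr h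
  rw [ENNReal.coe_mul, ENNReal.coe_pow, ENNReal.coe_toNNReal (pi1_ne_top π _)] at h2
  simpa using h2

lemma mkN_le (k : ℕ) (A : Finset ℕ) (hA : A ⊆ Finset.range k) :
    nEval (mkN π k) A ≤ pi1 π ↑A + pw k := by
  rw [nEval_mkN, Finset.inter_eq_left.mpr hA]
  have h : ((num π k A : ℕ) : ℝ≥0) ≤ (pi1 π ↑A).toNNReal * (2 : ℝ≥0) ^ k + 1 :=
    le_of_lt (Nat.ceil_lt_add_one (zero_le))
  have h2 := ENNReal.coe_le_coe.mpr h
  rw [ENNReal.coe_add, ENNReal.coe_mul, ENNReal.coe_pow, ENNReal.coe_one,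
    ENNReal.coe_toNNReal (pi1_ne_top π _)] at h2
  calc ((num π k A : ℕ) : ℝ≥0∞) / 2 ^ k
      ≤ (pi1 π ↑A * 2 ^ k + 1) / 2 ^ k := by
        apply ENNReal.div_le_div_right
        simpa using h2
    _ = pi1 π ↑A + pw k := by
        rw [ENNReal.add_div, mul_div_assoc, ENNReal.div_self (two_pow_ne_zero k) (two_pow_ne_top k),
          mul_one, pw, one_div, ENNReal.inv_pow]

lemma nEval_mkN_empty (hs : IsSubmeasure π) (k : ℕ) : nEval (mkN π k) ∅ = 0 := by
  rw [nEval_mkN]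
  have : num π k (∅ ∩ Finset.range k) = 0 := by
    rw [Finset.empty_inter]
    simp [num, pi1_empty π hs]
  rw [this]
  simp

lemma num_mono (hs : IsSubmeasure π) (k : ℕ) {A B : Finset ℕ} (h : A ⊆ B) :
    num π k A ≤ num π k B := by
  apply Nat.ceil_mono
  apply mul_le_mul_left
  exact ENNReal.toNNReal_mono (pi1_ne_top π _) (pi1_mono π hs (Finset.coe_subset.mpr h))

lemma nEval_mkN_mono (hs : IsSubmeasure π) (k : ℕ) (A B : Finset ℕ) (h : A ⊆ B) :
    nEval (mkN π k) A ≤ nEval (mkN π k) B := by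
  rw [nEval_mkN, nEval_mkN]
  apply ENNReal.div_le_div_right
  exact_mod_cast Nat.cast_le.mpr (num_mono π hs k (Finset.inter_subset_inter h Finset.Subset.rfl))

lemma num_subadd (hs : IsSubmeasure π) (k : ℕ) (A B : Finset ℕ) :
    num π k (A ∪ B) ≤ num π k A + num π k B := by
  apply Nat.ceil_le.mpr
  have h1 : pi1 π ↑(A ∪ B) ≤ pi1 π ↑A + pi1 π ↑B := by
    rw [Finset.coe_union]
    exact pi1_subadd π hs _ _
  have hne : pi1 π ↑A + pi1 π ↑B ≠ ⊤ :=
    ENNReal.add_ne_top.mpr ⟨pi1_ne_top π _, pi1_ne_top π _⟩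
  have h2 := ENNReal.toNNReal_mono hne h1
  rw [ENNReal.toNNReal_add (pi1_ne_top π _) (pi1_ne_top π _)] at h2
  calc ((pi1 π ↑(A ∪ B)).toNNReal : ℝ≥0) * (2 : ℝ≥0) ^ k
      ≤ ((pi1 π ↑A).toNNReal + (pi1 π ↑B).toNNReal) * (2 : ℝ≥0) ^ k :=
        mul_le_mul_left h2 _
    _ = (pi1 π ↑A).toNNReal * (2 : ℝ≥0) ^ k + (pi1 π ↑B).toNNReal * (2 : ℝ≥0) ^ k := add_mul _ _ _
    _ ≤ ((num π k A : ℕ) : ℝ≥0) + ((num π k B : ℕ) : ℝ≥0) :=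
        add_le_add (Nat.le_ceil _) (Nat.le_ceil _)
    _ = (((num π k A + num π k B : ℕ)) : ℝ≥0) := by push_cast; ring

lemma nEval_mkN_subadd (hs : IsSubmeasure π) (k : ℕ) (A B : Finset ℕ) :
    nEval (mkN π k) (A ∪ B) ≤ nEval (mkN π k) A + nEval (mkN π k) B := by
  rw [nEval_mkN, nEval_mkN, nEval_mkN, ← ENNReal.add_div]
  apply ENNReal.div_le_div_right
  rw [Finset.union_inter_distrib_right]
  exact_mod_cast Nat.cast_le.mpr (num_subadd π hs k _ _)

end Pi


section Branch

variable (π : Set ℕ → ℝ≥0∞)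

def branch (s : ℕ) : List Node := (List.range s).map (fun j => mkN π (j + 1))

lemma branch_length (s : ℕ) : (branch π s).length = s := by simp [branch]

lemma branch_getElem (s j : ℕ) (h : j < (branch π s).length) :
    (branch π s)[j]'h = mkN π (j + 1) := by
  simp [branch]

lemma branch_take (i s : ℕ) (h : i ≤ s) : (branch π s).take i = branch π i := by
  unfold branch
  rw [← List.map_take, List.take_range, min_eq_left h]

lemma branch_inj : Function.Injective (branch π) := by
  intro a b hab
  have := congrArg List.length hab
  rwa [branch_length, branch_length] at this

lemma lastN_branch (s : ℕ) (h : 0 < s) : lastN (branch π s) = mkN π s := by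
  have hl : 0 < (branch π s).length := by rwa [branch_length]
  rw [lastN_eq _ hl]
  have h2 := branch_getElem π s ((branch π s).length - 1) (by omega)
  rw [h2, branch_length]
  congr 1
  omega

lemma good_branch (hs : IsSubmeasure π) (s : ℕ) (h : 0 < s) : Good (branch π s) := by
  refine ⟨by rwa [branch_length], ?_, ?_, ?_, ?_⟩
  · intro j hj
    rw [branch_getElem]
    exact nEval_mkN_empty π hs _
  · intro j hj A B hAB
    rw [branch_getElem]
    exact nEval_mkN_mono π hs _ A B hAB
  · intro j hj A B
    rw [branch_getElem]
    exact nEval_mkN_subadd π hs _ A B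
  · intro j hj A hA
    have hA2 : A ⊆ Finset.range (j + 2) :=
      hA.trans (Finset.range_subset_range.mpr (by omega))
    rw [branch_getElem, branch_getElem]
    constructor
    · calc nEval (mkN π (j + 2)) A ≤ pi1 π ↑A + pw (j + 2) := mkN_le π _ A hA2
        _ ≤ nEval (mkN π (j + 1)) A + pw (j + 1) :=
            add_le_add (mkN_ge π _ A hA) (pw_anti (by omega))
    · calc nEval (mkN π (j + 1)) A ≤ pi1 π ↑A + pw (j + 1) := mkN_le π _ A hA
        _ ≤ nEval (mkN π (j + 2)) A + pw (j + 1) :=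
            add_le_add_left (mkN_ge π _ A hA2) _

def gb (i : ℕ) : ℕ := ncode (branch π (i + 1))

lemma gb_inj : Function.Injective (gb π) := by
  intro a b hab
  have := branch_inj π (ncode_inj hab)
  omega

end Branch

section Main

lemma tsum_pw : ∑' k : ℕ, pw k = 2 := by
  unfold pw
  rw [ENNReal.tsum_geometric]
  have h1 : (1 : ℝ≥0∞) - 2⁻¹ = 2⁻¹ := by
    conv_lhs => rw [← ENNReal.inv_two_add_inv_two]
    rw [ENNReal.add_sub_cancel_right (by simp : (2 : ℝ≥0∞)⁻¹ ≠ ⊤)]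
  rw [h1, inv_inv]

lemma sum_pw_le (a b : ℕ) : ∑ k ∈ Finset.Ico (a + 1) b, pw k ≤ pw a := by
  calc ∑ k ∈ Finset.Ico (a + 1) b, pw k
      = ∑ j ∈ Finset.range (b - (a + 1)), pw (a + 1 + j) := by
        rw [Finset.sum_Ico_eq_sum_range]
    _ ≤ ∑' j : ℕ, pw (a + 1 + j) := ENNReal.sum_le_tsum _
    _ = ∑' j : ℕ, pw (a + 1) * pw j := by
        apply tsum_congr
        intro j
        rw [pw, pw, pw, pow_add]
    _ = pw (a + 1) * 2 := by rw [ENNReal.tsum_mul_left, tsum_pw]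
    _ = pw a := by
        rw [pw, pw, pow_succ, mul_assoc, ENNReal.inv_mul_cancel two_ne_zero ENNReal.ofNat_ne_top,
          mul_one]

lemma half_ne_zero' {ε : ℝ≥0∞} (h : ε ≠ 0) : ε / 2 ≠ 0 := by
  simp [ENNReal.div_eq_zero_iff, h, ENNReal.ofNat_ne_top]

lemma exh_of_small (φ : Set ℕ → ℝ≥0∞) (X : Set ℕ)
    (h : ∀ ε : ℝ≥0∞, 0 < ε → ε ≤ 1 → ∃ F : Finset ℕ, φ (X \ (F : Set ℕ)) < ε) :
    X ∈ Exh φ := by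
  intro ε hε
  rcases le_total ε 1 with h1 | h1
  · exact h ε hε h1
  · obtain ⟨F, hF⟩ := h 1 zero_lt_one le_rfl
    exact ⟨F, lt_of_lt_of_le hF h1⟩

lemma main_back (π : Set ℕ → ℝ≥0∞) (hs : IsSubmeasure π) (hl : IsLSCSubmeasure π) (X : Set ℕ)
    (hY : (gb π '' X) ∈ Exh phimax) : X ∈ Exh (pi1 π) := by
  classical
  apply exh_of_small
  intro ε hε hε1
  have hεt : ε ≠ ⊤ := ne_top_of_le_ne_top ENNReal.one_ne_top hε1
  obtain ⟨F, hF⟩ := hY (ε / 2) (zero_lt_iff.mpr (half_ne_zero' hε.ne'))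
  set J : Finset ℕ := F.image (fun c => (Function.invFun ncode c).length - 1) with hJ
  refine ⟨J, ?_⟩
  have key : ∀ n : ℕ, 1 ≤ n → pi1 π ((X \ ↑J) ∩ {k | k < n}) ≤ ε / 2 := by
    intro n hn
    set K : Finset ℕ := (Finset.range n).filter (fun i => i ∈ X ∧ i ∉ J) with hK
    have hKcoe : (↑K : Set ℕ) = (X \ ↑J) ∩ {k | k < n} := by
      ext i
      simp only [hK, Finset.coe_filter, Finset.mem_range, Set.mem_setOf_eq, Set.mem_inter_iff,
        Set.mem_diff, Finset.mem_coe]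
      tauto
    have hKr : K ⊆ Finset.range n := Finset.filter_subset _ _
    have hKL : K ⊆ Lf (branch π n) (gb π '' X \ ↑F) := by
      intro i hi
      rw [hK, Finset.mem_filter, Finset.mem_range] at hi
      obtain ⟨hin, hiX, hiJ⟩ := hi
      rw [mem_Lf, branch_length]
      refine ⟨hin, ?_⟩
      rw [branch_take π (i + 1) n (by omega)]
      constructor
      · exact ⟨i, hiX, rfl⟩
      · intro hc
        apply hiJ
        rw [hJ, Finset.mem_image]
        refine ⟨ncode (branch π (i + 1)), hc, ?_⟩
        rw [Function.leftInverse_invFun ncode_inj, branch_length]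
        omega
    have h1 : pi1 π ↑K ≤ nEval (mkN π n) K := mkN_ge π n K hKr
    have h2 : nEval (mkN π n) K ≤ nEval (mkN π n) (Lf (branch π n) (gb π '' X \ ↑F)) :=
      nEval_mkN_mono π hs n _ _ hKL
    have h3 : pval (branch π n) (gb π '' X \ ↑F)
        = nEval (mkN π n) (Lf (branch π n) (gb π '' X \ ↑F)) := by
      rw [pval, dif_pos (good_branch π hs n hn), lastN_branch π n hn]
    have h4 : pval (branch π n) (gb π '' X \ ↑F) ≤ phimax (gb π '' X \ ↑F) :=
      le_iSup (fun p => pval p (gb π '' X \ ↑F)) (branch π n)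
    rw [← hKcoe]
    calc pi1 π ↑K ≤ nEval (mkN π n) K := h1
      _ ≤ nEval (mkN π n) (Lf (branch π n) (gb π '' X \ ↑F)) := h2
      _ = pval (branch π n) (gb π '' X \ ↑F) := h3.symm
      _ ≤ phimax (gb π '' X \ ↑F) := h4
      _ ≤ ε / 2 := le_of_lt hF
  have hlim := pi1_lsc π hl (X \ ↑J)
  have hle : pi1 π (X \ ↑J) ≤ ε / 2 :=
    le_of_tendsto hlim (Filter.eventually_atTop.mpr ⟨1, fun n hn => key n hn⟩)
  exact lt_of_le_of_lt hle (ENNReal.half_lt_self hε.ne' hεt)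

lemma main_fwd (π : Set ℕ → ℝ≥0∞) (hs : IsSubmeasure π) (X : Set ℕ)
    (hX : X ∈ Exh (pi1 π)) : (gb π '' X) ∈ Exh phimax := by
  classical
  apply exh_of_small
  intro ε hε hε1
  have hεt : ε ≠ ⊤ := ne_top_of_le_ne_top ENNReal.one_ne_top hε1
  obtain ⟨n₀, hn₀⟩ : ∃ n, (2 : ℝ≥0∞)⁻¹ ^ n < ε / 2 / 2 / 2 :=
    ENNReal.exists_inv_two_pow_lt (half_ne_zero' (half_ne_zero' (half_ne_zero' hε.ne')))
  have hn₀' : pw n₀ < ε / 2 / 2 / 2 := hn₀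
  obtain ⟨G₀, hG₀⟩ := hX (ε / 2 / 2) (zero_lt_iff.mpr (half_ne_zero' (half_ne_zero' hε.ne')))
  set Y := gb π '' X with hYdef
  set F : Finset ℕ := (G₀ ∪ Finset.range n₀).image (gb π) with hFdef
  refine ⟨F, ?_⟩
  have bound : ∀ p : List Node, pval p (Y \ ↑F) ≤ ε / 2 := by
    intro p
    by_cases hg : Good p
    swap
    · rw [pval, dif_neg hg]
      exact zero_le
    rw [pval, dif_pos hg, lastN_eq p hg.1]
    set L := Lf p (Y \ ↑F) with hL
    by_cases hLe : L = ∅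
    · rw [hLe, hg.2.1 _ _]
      exact zero_le
    have hmem : ∀ i ∈ L, i < p.length ∧ i ∈ X ∧ i ∉ G₀ ∧ n₀ ≤ i ∧
        p.take (i + 1) = branch π (i + 1) := by
      intro i hi
      rw [hL, mem_Lf] at hi
      obtain ⟨hip, hiYF⟩ := hi
      obtain ⟨hiY, hiF⟩ := hiYF
      obtain ⟨j, hjX, hji⟩ := hiY
      have htk : p.take (i + 1) = branch π (j + 1) := (ncode_inj hji).symm
      have hlen : i + 1 = j + 1 := by
        have hh := congrArg List.length htk
        rw [List.length_take, branch_length] at hh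
        omega
      have hji2 : j = i := by omega
      subst hji2
      have hnotin : j ∉ G₀ ∪ Finset.range n₀ := by
        intro hc
        apply hiF
        rw [htk]
        apply Finset.mem_coe.mpr
        rw [hFdef, Finset.mem_image]
        exact ⟨j, hc, rfl⟩
      rw [Finset.mem_union, Finset.mem_range] at hnotin
      push_neg at hnotin
      exact ⟨hip, hjX, hnotin.1, hnotin.2, htk⟩
    have hLne : L.Nonempty := Finset.nonempty_of_ne_empty hLe
    set M := L.max' hLne with hMdef
    obtain ⟨hMp, hMX, hMG, hMn₀, hMtake⟩ := hmem M (L.max'_mem hLne)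
    have hnode : ∀ j, j ≤ M → ∀ (hj : j < p.length), p[j]'hj = mkN π (j + 1) := by
      intro j hjM hj
      have e1 : (p.take (M + 1)).getD j default = p[j]'hj := by
        rw [List.getD_eq_getElem _ _ (by rw [List.length_take]; omega)]
        simp [List.getElem_take]
      have e2 : (p.take (M + 1)).getD j default = mkN π (j + 1) := by
        rw [hMtake, List.getD_eq_getElem _ _ (by rw [branch_length]; omega), branch_getElem]
      rw [← e1, e2]
    have hLr : L ⊆ Finset.range (M + 1) := by
      intro i hi
      rw [Finset.mem_range]
      exact Nat.lt_succ_of_le (Finset.le_max' L i hi)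
    have hLX : (↑L : Set ℕ) ⊆ X \ ↑G₀ := by
      intro i hi
      rw [Finset.mem_coe] at hi
      obtain ⟨_, hiX, hiG, _, _⟩ := hmem i hi
      exact ⟨hiX, by simpa using hiG⟩
    have hcoh := hg.2.2.2.2
    have chain : ∀ t, M ≤ t → ∀ (ht : t < p.length),
        nEval (p[t]'ht) L ≤ nEval (mkN π (M + 1)) L + ∑ k ∈ Finset.Ico (M + 1) (t + 1), pw k := by
      intro t
      induction t with
      | zero =>
        intro hMt ht
        have hM0 : M = 0 := by omega
        rw [hnode 0 (by omega) ht, hM0]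
        simp
      | succ t ih =>
        intro hMt ht
        rcases Nat.eq_or_lt_of_le hMt with hEq | hlt
        · rw [hnode (t + 1) (by omega) ht, ← hEq]
          exact le_self_add
        · have htl : t < p.length := by omega
          have hMt' : M ≤ t := by omega
          have hLsub : L ⊆ Finset.range (t + 1) :=
            hLr.trans (Finset.range_subset_range.mpr (by omega))
          calc nEval (p[t+1]'ht) L ≤ nEval (p[t]'htl) L + pw (t + 1) :=
              (hcoh t ht L hLsub).1
            _ ≤ (nEval (mkN π (M + 1)) L + ∑ k ∈ Finset.Ico (M + 1) (t + 1), pw k) + pw (t + 1) :=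
              add_le_add_left (ih hMt' htl) _
            _ = nEval (mkN π (M + 1)) L + ∑ k ∈ Finset.Ico (M + 1) (t + 2), pw k := by
              rw [add_assoc, Finset.sum_Ico_succ_top (show M + 1 ≤ t + 1 by omega) pw]
    have hlen1 : p.length - 1 < p.length := by
      have := hg.1
      omega
    have hMlen : M ≤ p.length - 1 := by omega
    have hchain := chain (p.length - 1) hMlen hlen1
    have hsum : ∑ k ∈ Finset.Ico (M + 1) (p.length - 1 + 1), pw k ≤ pw M := sum_pw_le M _
    have hmk : nEval (mkN π (M + 1)) L ≤ pi1 π ↑L + pw (M + 1) := mkN_le π (M + 1) L hLr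
    have hpi : pi1 π ↑L ≤ pi1 π (X \ ↑G₀) := pi1_mono π hs hLX
    calc nEval (p[p.length - 1]'hlen1) L
        ≤ nEval (mkN π (M + 1)) L + ∑ k ∈ Finset.Ico (M + 1) (p.length - 1 + 1), pw k := hchain
      _ ≤ (pi1 π ↑L + pw (M + 1)) + pw M := add_le_add hmk hsum
      _ ≤ (ε / 2 / 2 + ε / 2 / 2 / 2) + ε / 2 / 2 / 2 := by
          apply add_le_add
          · apply add_le_add
            · exact le_of_lt (lt_of_le_of_lt hpi hG₀)
            · exact le_of_lt (lt_of_le_of_lt (pw_anti (by omega)) hn₀')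
          · exact le_of_lt (lt_of_le_of_lt (pw_anti hMn₀) hn₀')
      _ = ε / 2 := by rw [add_assoc, ENNReal.add_halves, ENNReal.add_halves]
  calc phimax (Y \ ↑F) ≤ ε / 2 := iSup_le bound
    _ < ε := ENNReal.half_lt_self hε.ne' hεt

end Main

lemma invFun_gb (i : ℕ) : (Function.invFun ncode (gb π i)).length - 1 = i := by
  have h1 : Function.invFun ncode (gb π i) = branch π (i + 1) :=
    Function.leftInverse_invFun ncode_inj _
  rw [h1, branch_length]
  omega

end WRKC

/-- There is a lower semicontinuous submeasure `φ_max` on `P(ℕ)` whose exhaustive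
ideal is wRK-above the exhaustive ideal of every lsc submeasure on `P(ℕ)`:
a wRK-complete analytic P-ideal. -/
theorem exists_wRK_complete_analytic_P_ideal :
    ∃ φmax : Set ℕ → ℝ≥0∞, IsSubmeasure φmax ∧ IsLSCSubmeasure φmax ∧
      ∀ π : Set ℕ → ℝ≥0∞, IsSubmeasure π → IsLSCSubmeasure π →
        wRK (Exh π) (Exh φmax) := by

  classical
  refine ⟨WRKC.phimax, WRKC.isSubmeasure_phimax, WRKC.isLSC_phimax, ?_⟩
  intro π hs hl
  refine ⟨Set.range (WRKC.gb π),
    (fun b => (Function.invFun WRKC.ncode b.val).length - 1),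
    Set.infinite_range_of_injective (WRKC.gb_inj π), ?_⟩
  intro X
  have hY : (Subtype.val '' ((fun b : ↥(Set.range (WRKC.gb π)) =>
      (Function.invFun WRKC.ncode b.val).length - 1) ⁻¹' X)) = WRKC.gb π '' X := by
    ext c
    constructor
    · rintro ⟨b, hb, rfl⟩
      obtain ⟨i, hi⟩ := b.2
      refine ⟨i, ?_, hi⟩
      have h2 : (Function.invFun WRKC.ncode b.val).length - 1 = i := by
        rw [← hi, WRKC.invFun_gb]
      have hb' : (Function.invFun WRKC.ncode b.val).length - 1 ∈ X := hb
      rwa [h2] at hb'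
    · rintro ⟨i, hiX, rfl⟩
      refine ⟨⟨WRKC.gb π i, Set.mem_range_self i⟩, ?_, rfl⟩
      show (Function.invFun WRKC.ncode (WRKC.gb π i)).length - 1 ∈ X
      rwa [WRKC.invFun_gb]
  rw [hY]
  constructor
  · intro h
    exact WRKC.main_fwd π hs X ((WRKC.exh_iff π hs X).mp h)
  · intro h
    exact (WRKC.exh_iff π hs X).mpr (WRKC.main_back π hs hl X h)
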